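/- arXiv:2402.09098 — 3 statements merged into one kernel-verified Lean document; each statement's English description precedes it below -/
import Mathlib

section
/- Let X₁, X₂, Y₁, Y₂ be square-integrable random vectors in ℝ^d. Then |⟨⟨P^{X₁},P^{X₂}⟩⟩ − ⟨⟨P^{Y₁},P^{Y₂}⟩⟩| ≤ (E‖Y₂‖²)^{1/2} · W₂(P^{X₁}, P^{Y₁}) + (E‖X₁‖²)^{1/2} · W₂(P^{X₂}, P^{Y₂}), where ⟨⟨P,Q⟩⟩ denotes the Wasserstein product sup_{γ ∈ C(P,Q)} ∫⟨x,y⟩dγ and W₂ is the 2-Wasserstein distance. -/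
open MeasureTheory

noncomputable section

/-- `γ` is a coupling of `P` and `Q`. -/
def IsCoupling {α β : Type*} [MeasurableSpace α] [MeasurableSpace β]
    (γ : Measure (α × β)) (P : Measure α) (Q : Measure β) : Prop :=
  γ.map Prod.fst = P ∧ γ.map Prod.snd = Q

/-- The Wasserstein product `⟨⟨P,Q⟩⟩`. -/
def wip {d : ℕ} (P Q : Measure (EuclideanSpace ℝ (Fin d))) : ℝ :=
  sSup {r | ∃ γ : Measure (EuclideanSpace ℝ (Fin d) × EuclideanSpace ℝ (Fin d)),
    IsCoupling γ P Q ∧ r = ∫ z, (inner ℝ z.1 z.2 : ℝ) ∂γ}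

/-- The squared 2-Wasserstein distance. -/
def W2sq {d : ℕ} (P Q : Measure (EuclideanSpace ℝ (Fin d))) : ℝ :=
  sInf {r | ∃ γ : Measure (EuclideanSpace ℝ (Fin d) × EuclideanSpace ℝ (Fin d)),
    IsCoupling γ P Q ∧ r = ∫ z, ‖z.1 - z.2‖ ^ 2 ∂γ}

/-! ### Auxiliary lemmas -/

section Aux

open ProbabilityTheory

lemma my_sqrt_add_le {x y : ℝ} (hx : 0 ≤ x) (hy : 0 ≤ y) :
    Real.sqrt (x + y) ≤ Real.sqrt x + Real.sqrt y := by
  rw [show x + y = Real.sqrt x ^ 2 + Real.sqrt y ^ 2 by rw [Real.sq_sqrt hx, Real.sq_sqrt hy]]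
  have h1 := Real.sqrt_nonneg x
  have h2 := Real.sqrt_nonneg y
  calc Real.sqrt (Real.sqrt x ^ 2 + Real.sqrt y ^ 2)
      ≤ Real.sqrt ((Real.sqrt x + Real.sqrt y) ^ 2) := Real.sqrt_le_sqrt (by nlinarith)
  _ = _ := Real.sqrt_sq (by positivity)

variable {α : Type*} [MeasurableSpace α] {d : ℕ}

local notation "E" => EuclideanSpace ℝ (Fin d)

lemma integrable_mul_norm {ν : Measure α} {f g : α → E}
    (hf : AEMeasurable f ν) (hg : AEMeasurable g ν)
    (hf2 : Integrable (fun a => ‖f a‖ ^ 2) ν) (hg2 : Integrable (fun a => ‖g a‖ ^ 2) ν) :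
    Integrable (fun a => ‖f a‖ * ‖g a‖) ν := by
  refine (hf2.add hg2).mono' ((hf.norm.mul hg.norm).aestronglyMeasurable) ?_
  filter_upwards with a
  simp only [Pi.add_apply]
  rw [Real.norm_eq_abs, abs_of_nonneg (by positivity)]
  nlinarith [norm_nonneg (f a), norm_nonneg (g a), sq_nonneg (‖f a‖ - ‖g a‖)]

lemma integrable_inner' {ν : Measure α} {f g : α → E}
    (hf : AEMeasurable f ν) (hg : AEMeasurable g ν)
    (hf2 : Integrable (fun a => ‖f a‖ ^ 2) ν) (hg2 : Integrable (fun a => ‖g a‖ ^ 2) ν) :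
    Integrable (fun a => (inner ℝ (f a) (g a) : ℝ)) ν := by
  refine (integrable_mul_norm hf hg hf2 hg2).mono' (hf.inner hg).aestronglyMeasurable ?_
  filter_upwards with a
  rw [Real.norm_eq_abs]
  exact abs_real_inner_le_norm _ _

lemma integral_mul_norm_le {ν : Measure α} {f g : α → E}
    (hf : AEMeasurable f ν) (hg : AEMeasurable g ν)
    (hf2 : Integrable (fun a => ‖f a‖ ^ 2) ν) (hg2 : Integrable (fun a => ‖g a‖ ^ 2) ν) :
    ∫ a, ‖f a‖ * ‖g a‖ ∂ν ≤ Real.sqrt (∫ a, ‖f a‖ ^ 2 ∂ν) * Real.sqrt (∫ a, ‖g a‖ ^ 2 ∂ν) := by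
  have hpq : Real.HolderConjugate 2 2 := Real.HolderConjugate.two_two
  have hmf : MemLp (fun a => ‖f a‖) (ENNReal.ofReal 2) ν := by
    rw [show ENNReal.ofReal 2 = 2 by norm_num]
    exact (memLp_two_iff_integrable_sq hf.norm.aestronglyMeasurable).mpr hf2
  have hmg : MemLp (fun a => ‖g a‖) (ENNReal.ofReal 2) ν := by
    rw [show ENNReal.ofReal 2 = 2 by norm_num]
    exact (memLp_two_iff_integrable_sq hg.norm.aestronglyMeasurable).mpr hg2
  have h := integral_mul_le_Lp_mul_Lq_of_nonneg hpq
    (Filter.Eventually.of_forall fun a => norm_nonneg (f a))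
    (Filter.Eventually.of_forall fun a => norm_nonneg (g a)) hmf hmg
  calc ∫ a, ‖f a‖ * ‖g a‖ ∂ν
      ≤ (∫ a, ‖f a‖ ^ (2:ℝ) ∂ν) ^ (1/2:ℝ) * (∫ a, ‖g a‖ ^ (2:ℝ) ∂ν) ^ (1/2:ℝ) := h
  _ = _ := by
      simp_rw [show ∀ r : ℝ, r ^ (2:ℝ) = r ^ 2 from fun r => by
        rw [show (2:ℝ) = ((2:ℕ):ℝ) by norm_num, Real.rpow_natCast]]
      rw [← Real.sqrt_eq_rpow, ← Real.sqrt_eq_rpow]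

lemma abs_integral_inner_le {ν : Measure α} {f g : α → E}
    (hf : AEMeasurable f ν) (hg : AEMeasurable g ν)
    (hf2 : Integrable (fun a => ‖f a‖ ^ 2) ν) (hg2 : Integrable (fun a => ‖g a‖ ^ 2) ν) :
    |∫ a, (inner ℝ (f a) (g a) : ℝ) ∂ν|
      ≤ Real.sqrt (∫ a, ‖f a‖ ^ 2 ∂ν) * Real.sqrt (∫ a, ‖g a‖ ^ 2 ∂ν) := by
  calc |∫ a, (inner ℝ (f a) (g a) : ℝ) ∂ν| ≤ ∫ a, ‖f a‖ * ‖g a‖ ∂ν := by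
        rw [← Real.norm_eq_abs]
        refine (norm_integral_le_integral_norm _).trans ?_
        simp_rw [Real.norm_eq_abs]
        refine integral_mono_of_nonneg (Filter.Eventually.of_forall fun a => abs_nonneg _)
          (integrable_mul_norm hf hg hf2 hg2) (Filter.Eventually.of_forall fun a => ?_)
        exact abs_real_inner_le_norm _ _
  _ ≤ _ := integral_mul_norm_le hf hg hf2 hg2

/-- transfer of integrals along a pushforward equality -/
lemma integral_comp_eq {β : Type*} [MeasurableSpace β] {ν : Measure α} {g : α → β}
    (hg : Measurable g) {P : Measure β} (hmap : ν.map g = P) {f : β → ℝ}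
    (hf : AEStronglyMeasurable f P) : ∫ a, f (g a) ∂ν = ∫ x, f x ∂P := by
  rw [← hmap] at hf ⊢
  rw [integral_map hg.aemeasurable hf]

lemma integrable_comp_of_map {β : Type*} [MeasurableSpace β] {ν : Measure α} {g : α → β}
    (hg : Measurable g) {P : Measure β} (hmap : ν.map g = P) {f : β → ℝ}
    (hfm : AEStronglyMeasurable f P) (hfi : Integrable f P) :
    Integrable (fun a => f (g a)) ν := by
  have h := (integrable_map_measure (by rwa [hmap]) hg.aemeasurable).mp (by rwa [hmap])
  exact h

lemma isProb_of_coupling {β γ' : Type*} [MeasurableSpace β] [MeasurableSpace γ']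
    {γm : Measure (β × γ')} {P : Measure β} {Q : Measure γ'} [IsProbabilityMeasure P]
    (h : IsCoupling γm P Q) : IsProbabilityMeasure γm := by
  constructor
  have h1 : γm.map Prod.fst Set.univ = P Set.univ := by rw [h.1]
  rw [Measure.map_apply measurable_fst MeasurableSet.univ, Set.preimage_univ] at h1
  rw [h1, measure_univ]

lemma isCoupling_prod {P Q : Measure E} [IsProbabilityMeasure P] [IsProbabilityMeasure Q] :
    IsCoupling (P.prod Q) P Q :=
  ⟨Measure.fst_prod, Measure.snd_prod⟩

lemma wip_elem_le {P Q : Measure E} [IsProbabilityMeasure P] [IsProbabilityMeasure Q]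
    (hP : Integrable (fun x => ‖x‖ ^ 2) P) (hQ : Integrable (fun x => ‖x‖ ^ 2) Q)
    {γm : Measure (E × E)} (h : IsCoupling γm P Q) :
    ∫ z, (inner ℝ z.1 z.2 : ℝ) ∂γm
      ≤ Real.sqrt (∫ x, ‖x‖ ^ 2 ∂P) * Real.sqrt (∫ x, ‖x‖ ^ 2 ∂Q) := by
  haveI := isProb_of_coupling h
  have hsm : AEStronglyMeasurable (fun x : E => ‖x‖ ^ 2) P :=
    (measurable_norm.pow_const 2).aestronglyMeasurable
  have hsm' : AEStronglyMeasurable (fun x : E => ‖x‖ ^ 2) Q :=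
    (measurable_norm.pow_const 2).aestronglyMeasurable
  have h1 : Integrable (fun z : E × E => ‖z.1‖ ^ 2) γm :=
    integrable_comp_of_map measurable_fst h.1 hsm hP
  have h2 : Integrable (fun z : E × E => ‖z.2‖ ^ 2) γm :=
    integrable_comp_of_map measurable_snd h.2 hsm' hQ
  have hb := abs_integral_inner_le (f := Prod.fst) (g := Prod.snd)
    measurable_fst.aemeasurable measurable_snd.aemeasurable h1 h2
  rw [integral_comp_eq measurable_fst h.1 hsm, integral_comp_eq measurable_snd h.2 hsm'] at hb
  exact (le_abs_self _).trans hb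

lemma wip_bddAbove {P Q : Measure E} [IsProbabilityMeasure P] [IsProbabilityMeasure Q]
    (hP : Integrable (fun x => ‖x‖ ^ 2) P) (hQ : Integrable (fun x => ‖x‖ ^ 2) Q) :
    BddAbove {r | ∃ γ : Measure (E × E), IsCoupling γ P Q ∧ r = ∫ z, (inner ℝ z.1 z.2 : ℝ) ∂γ} := by
  refine ⟨Real.sqrt (∫ x, ‖x‖ ^ 2 ∂P) * Real.sqrt (∫ x, ‖x‖ ^ 2 ∂Q), ?_⟩
  rintro r ⟨γm, h, rfl⟩
  exact wip_elem_le hP hQ h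

lemma le_wip {P Q : Measure E} [IsProbabilityMeasure P] [IsProbabilityMeasure Q]
    (hP : Integrable (fun x => ‖x‖ ^ 2) P) (hQ : Integrable (fun x => ‖x‖ ^ 2) Q)
    {γm : Measure (E × E)} (h : IsCoupling γm P Q) :
    ∫ z, (inner ℝ z.1 z.2 : ℝ) ∂γm ≤ wip P Q :=
  le_csSup (wip_bddAbove hP hQ) ⟨γm, h, rfl⟩

lemma wip_le {P Q : Measure E} [IsProbabilityMeasure P] [IsProbabilityMeasure Q] {B : ℝ}
    (hB : ∀ γm : Measure (E × E), IsCoupling γm P Q → ∫ z, (inner ℝ z.1 z.2 : ℝ) ∂γm ≤ B) :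
    wip P Q ≤ B := by
  refine csSup_le ⟨_, P.prod Q, isCoupling_prod, rfl⟩ ?_
  rintro r ⟨γm, h, rfl⟩
  exact hB γm h

lemma W2sq_nonneg (P Q : Measure E) [IsProbabilityMeasure P] [IsProbabilityMeasure Q] :
    0 ≤ W2sq P Q := by
  refine le_csInf ⟨_, P.prod Q, isCoupling_prod, rfl⟩ ?_
  rintro r ⟨γm, h, rfl⟩
  exact integral_nonneg fun z => by positivity

lemma exists_coupling_W2sq_lt (P Q : Measure E) [IsProbabilityMeasure P] [IsProbabilityMeasure Q]
    {δ : ℝ} (hδ : 0 < δ) :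
    ∃ π : Measure (E × E), IsCoupling π P Q ∧ ∫ z, ‖z.1 - z.2‖ ^ 2 ∂π < W2sq P Q + δ := by
  have hne : {r | ∃ γ : Measure (E × E), IsCoupling γ P Q ∧ r = ∫ z, ‖z.1 - z.2‖ ^ 2 ∂γ}.Nonempty :=
    ⟨_, P.prod Q, isCoupling_prod, rfl⟩
  have hbd : BddBelow {r | ∃ γ : Measure (E × E), IsCoupling γ P Q ∧ r = ∫ z, ‖z.1 - z.2‖ ^ 2 ∂γ} := by
    refine ⟨0, ?_⟩
    rintro r ⟨γm, h, rfl⟩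
    exact integral_nonneg fun z => by positivity
  have hlt : W2sq P Q < W2sq P Q + δ := by linarith
  obtain ⟨r, ⟨π, hπ, rfl⟩, hr⟩ := (csInf_lt_iff hbd hne).mp hlt
  exact ⟨π, hπ, hr⟩

end Aux
section Core

open ProbabilityTheory

variable {α : Type*} [MeasurableSpace α] {d : ℕ}

local notation "E" => EuclideanSpace ℝ (Fin d)

lemma integrable_sq_norm_sub {ν : Measure α} {f g : α → E}
    (hf : AEMeasurable f ν) (hg : AEMeasurable g ν)
    (hf2 : Integrable (fun a => ‖f a‖ ^ 2) ν) (hg2 : Integrable (fun a => ‖g a‖ ^ 2) ν) :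
    Integrable (fun a => ‖f a - g a‖ ^ 2) ν := by
  refine ((hf2.add hg2).const_mul 2).mono'
    (((hf.sub hg).norm.pow_const 2).aestronglyMeasurable) ?_
  filter_upwards with a
  simp only [Pi.add_apply]
  rw [Real.norm_eq_abs, abs_of_nonneg (by positivity)]
  have h := norm_sub_le (f a) (g a)
  nlinarith [norm_nonneg (f a), norm_nonneg (g a), norm_nonneg (f a - g a),
    sq_nonneg (‖f a‖ - ‖g a‖)]

lemma core_gen {ν : Measure α} {f₁ f₂ g₁ g₂ : α → E}
    (hf₁ : AEMeasurable f₁ ν) (hf₂ : AEMeasurable f₂ ν)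
    (hg₁ : AEMeasurable g₁ ν) (hg₂ : AEMeasurable g₂ ν)
    (hf₁2 : Integrable (fun a => ‖f₁ a‖ ^ 2) ν) (hf₂2 : Integrable (fun a => ‖f₂ a‖ ^ 2) ν)
    (hg₁2 : Integrable (fun a => ‖g₁ a‖ ^ 2) ν) (hg₂2 : Integrable (fun a => ‖g₂ a‖ ^ 2) ν) :
    ∫ a, (inner ℝ (f₁ a) (f₂ a) : ℝ) ∂ν - ∫ a, (inner ℝ (g₁ a) (g₂ a) : ℝ) ∂ν
      ≤ Real.sqrt (∫ a, ‖f₁ a - g₁ a‖ ^ 2 ∂ν) * Real.sqrt (∫ a, ‖g₂ a‖ ^ 2 ∂ν)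
        + Real.sqrt (∫ a, ‖f₁ a‖ ^ 2 ∂ν) * Real.sqrt (∫ a, ‖f₂ a - g₂ a‖ ^ 2 ∂ν) := by
  have hd₁ : AEMeasurable (fun a => f₁ a - g₁ a) ν := hf₁.sub hg₁
  have hd₂ : AEMeasurable (fun a => f₂ a - g₂ a) ν := hf₂.sub hg₂
  have hd₁2 := integrable_sq_norm_sub hf₁ hg₁ hf₁2 hg₁2
  have hd₂2 := integrable_sq_norm_sub hf₂ hg₂ hf₂2 hg₂2
  have hIf := integrable_inner' hf₁ hf₂ hf₁2 hf₂2
  have hIg := integrable_inner' hg₁ hg₂ hg₁2 hg₂2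
  have hA := integrable_inner' hd₁ hg₂ hd₁2 hg₂2
  have hB := integrable_inner' hf₁ hd₂ hf₁2 hd₂2
  have key : ∫ a, (inner ℝ (f₁ a) (f₂ a) : ℝ) ∂ν - ∫ a, (inner ℝ (g₁ a) (g₂ a) : ℝ) ∂ν
      = ∫ a, (inner ℝ (f₁ a - g₁ a) (g₂ a) : ℝ) ∂ν + ∫ a, (inner ℝ (f₁ a) (f₂ a - g₂ a) : ℝ) ∂ν := by
    rw [← integral_sub hIf hIg, ← integral_add hA hB]
    refine integral_congr_ae (Filter.Eventually.of_forall fun a => ?_)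
    simp only []
    rw [inner_sub_left, inner_sub_right]
    ring
  rw [key]
  have h1 := (le_abs_self _).trans (abs_integral_inner_le hd₁ hg₂ hd₁2 hg₂2)
  have h2 := (le_abs_self _).trans (abs_integral_inner_le hf₁ hd₂ hf₁2 hd₂2)
  exact add_le_add h1 h2

lemma core_gen' {ν : Measure α} {f₁ f₂ g₁ g₂ : α → E}
    (hf₁ : AEMeasurable f₁ ν) (hf₂ : AEMeasurable f₂ ν)
    (hg₁ : AEMeasurable g₁ ν) (hg₂ : AEMeasurable g₂ ν)
    (hf₁2 : Integrable (fun a => ‖f₁ a‖ ^ 2) ν) (hf₂2 : Integrable (fun a => ‖f₂ a‖ ^ 2) ν)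
    (hg₁2 : Integrable (fun a => ‖g₁ a‖ ^ 2) ν) (hg₂2 : Integrable (fun a => ‖g₂ a‖ ^ 2) ν) :
    ∫ a, (inner ℝ (f₁ a) (f₂ a) : ℝ) ∂ν - ∫ a, (inner ℝ (g₁ a) (g₂ a) : ℝ) ∂ν
      ≤ Real.sqrt (∫ a, ‖f₁ a - g₁ a‖ ^ 2 ∂ν) * Real.sqrt (∫ a, ‖f₂ a‖ ^ 2 ∂ν)
        + Real.sqrt (∫ a, ‖g₁ a‖ ^ 2 ∂ν) * Real.sqrt (∫ a, ‖f₂ a - g₂ a‖ ^ 2 ∂ν) := by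
  have h := core_gen hf₂ hf₁ hg₂ hg₁ hf₂2 hf₁2 hg₂2 hg₁2
  have e1 : ∫ a, (inner ℝ (f₂ a) (f₁ a) : ℝ) ∂ν = ∫ a, (inner ℝ (f₁ a) (f₂ a) : ℝ) ∂ν :=
    integral_congr_ae (Filter.Eventually.of_forall fun a => real_inner_comm _ _)
  have e2 : ∫ a, (inner ℝ (g₂ a) (g₁ a) : ℝ) ∂ν = ∫ a, (inner ℝ (g₁ a) (g₂ a) : ℝ) ∂ν :=
    integral_congr_ae (Filter.Eventually.of_forall fun a => real_inner_comm _ _)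
  rw [e1, e2] at h
  linarith [h]

/-- Gluing of couplings via conditional kernels. -/
lemma glue {P₁ P₂ Q₁ Q₂ : Measure E} [IsProbabilityMeasure P₁] [IsProbabilityMeasure P₂]
    [IsProbabilityMeasure Q₁] [IsProbabilityMeasure Q₂]
    {γm π₁ π₂ : Measure (E × E)}
    (hγ : IsCoupling γm P₁ P₂) (h1 : IsCoupling π₁ P₁ Q₁) (h2 : IsCoupling π₂ P₂ Q₂) :
    ∃ lam : Measure ((E × E) × (E × E)),
      IsProbabilityMeasure lam ∧
      lam.map Prod.fst = γm ∧
      lam.map (fun z => (z.1.1, z.2.1)) = π₁ ∧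
      lam.map (fun z => (z.1.2, z.2.2)) = π₂ := by
  haveI := isProb_of_coupling hγ
  haveI := isProb_of_coupling h1
  haveI := isProb_of_coupling h2
  set κ₁ := π₁.condKernel with hκ₁
  set κ₂ := π₂.condKernel with hκ₂
  set K : Kernel (E × E) (E × E) :=
    (κ₁.comap Prod.fst measurable_fst) ×ₖ (κ₂.comap Prod.snd measurable_snd) with hK
  refine ⟨γm ⊗ₘ K, inferInstance, ?_, ?_, ?_⟩
  · exact Measure.fst_compProd γm K
  · have hm : Measurable (fun z : (E × E) × (E × E) => (z.1.1, z.2.1)) :=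
      (measurable_fst.fst).prodMk (measurable_snd.fst)
    haveI : IsProbabilityMeasure ((γm ⊗ₘ K).map fun z : (E × E) × (E × E) => (z.1.1, z.2.1)) :=
      Measure.isProbabilityMeasure_map hm.aemeasurable
    refine ext_of_generate_finite _ generateFrom_prod.symm isPiSystem_prod ?_
      (by simp [measure_univ])
    rintro _ ⟨s, hs, t, ht, rfl⟩
    simp only [Set.mem_setOf_eq] at hs ht
    rw [Measure.map_apply hm (hs.prod ht)]
    have hpre : (fun z : (E × E) × (E × E) => (z.1.1, z.2.1)) ⁻¹' (s ×ˢ t)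
        = (s ×ˢ Set.univ) ×ˢ (t ×ˢ Set.univ) := by
      ext z; simp [Set.mem_prod]
    rw [hpre, Measure.compProd_apply_prod (hs.prod MeasurableSet.univ)
      (ht.prod MeasurableSet.univ)]
    have hKval : ∀ p : E × E, K p (t ×ˢ Set.univ) = κ₁ p.1 t := by
      intro p
      rw [hK, Kernel.prod_apply, Kernel.comap_apply, Kernel.comap_apply,
        Measure.prod_prod, measure_univ, mul_one]
    simp_rw [hKval]
    rw [show s ×ˢ (Set.univ : Set E) = Prod.fst ⁻¹' s by rw [Set.prod_univ],
      ← setLIntegral_map hs (Kernel.measurable_coe κ₁ ht) measurable_fst, hγ.1]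
    conv_rhs => rw [← π₁.disintegrate π₁.condKernel]
    rw [Measure.compProd_apply_prod hs ht]
    have : π₁.fst = P₁ := h1.1
    rw [this]
  · have hm : Measurable (fun z : (E × E) × (E × E) => (z.1.2, z.2.2)) :=
      (measurable_fst.snd).prodMk (measurable_snd.snd)
    haveI : IsProbabilityMeasure ((γm ⊗ₘ K).map fun z : (E × E) × (E × E) => (z.1.2, z.2.2)) :=
      Measure.isProbabilityMeasure_map hm.aemeasurable
    refine ext_of_generate_finite _ generateFrom_prod.symm isPiSystem_prod ?_
      (by simp [measure_univ])
    rintro _ ⟨s, hs, t, ht, rfl⟩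
    simp only [Set.mem_setOf_eq] at hs ht
    rw [Measure.map_apply hm (hs.prod ht)]
    have hpre : (fun z : (E × E) × (E × E) => (z.1.2, z.2.2)) ⁻¹' (s ×ˢ t)
        = (Set.univ ×ˢ s) ×ˢ (Set.univ ×ˢ t) := by
      ext z; simp [Set.mem_prod]
    rw [hpre, Measure.compProd_apply_prod (MeasurableSet.univ.prod hs)
      (MeasurableSet.univ.prod ht)]
    have hKval : ∀ p : E × E, K p (Set.univ ×ˢ t) = κ₂ p.2 t := by
      intro p
      rw [hK, Kernel.prod_apply, Kernel.comap_apply, Kernel.comap_apply,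
        Measure.prod_prod, measure_univ, one_mul]
    simp_rw [hKval]
    rw [show (Set.univ : Set E) ×ˢ s = Prod.snd ⁻¹' s by rw [Set.univ_prod],
      ← setLIntegral_map hs (Kernel.measurable_coe κ₂ ht) measurable_snd, hγ.2]
    conv_rhs => rw [← π₂.disintegrate π₂.condKernel]
    rw [Measure.compProd_apply_prod hs ht]
    have : π₂.fst = P₂ := h2.1
    rw [this]

end Core
section Main

open ProbabilityTheory

variable {d : ℕ}

local notation "E" => EuclideanSpace ℝ (Fin d)

/-- One-sided comparison: both decompositions. -/
lemma one_side {A₁ A₂ B₁ B₂ : Measure E} [IsProbabilityMeasure A₁] [IsProbabilityMeasure A₂]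
    [IsProbabilityMeasure B₁] [IsProbabilityMeasure B₂]
    (hA₁ : Integrable (fun x => ‖x‖ ^ 2) A₁) (hA₂ : Integrable (fun x => ‖x‖ ^ 2) A₂)
    (hB₁ : Integrable (fun x => ‖x‖ ^ 2) B₁) (hB₂ : Integrable (fun x => ‖x‖ ^ 2) B₂)
    {ρ₁ ρ₂ : Measure (E × E)} (h1 : IsCoupling ρ₁ A₁ B₁) (h2 : IsCoupling ρ₂ A₂ B₂) :
    wip A₁ A₂ ≤ wip B₁ B₂
        + Real.sqrt (∫ z, ‖z.1 - z.2‖ ^ 2 ∂ρ₁) * Real.sqrt (∫ x, ‖x‖ ^ 2 ∂B₂)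
        + Real.sqrt (∫ x, ‖x‖ ^ 2 ∂A₁) * Real.sqrt (∫ z, ‖z.1 - z.2‖ ^ 2 ∂ρ₂)
    ∧ wip A₁ A₂ ≤ wip B₁ B₂
        + Real.sqrt (∫ z, ‖z.1 - z.2‖ ^ 2 ∂ρ₁) * Real.sqrt (∫ x, ‖x‖ ^ 2 ∂A₂)
        + Real.sqrt (∫ x, ‖x‖ ^ 2 ∂B₁) * Real.sqrt (∫ z, ‖z.1 - z.2‖ ^ 2 ∂ρ₂) := by
  have hsmE : AEStronglyMeasurable (fun x : E => ‖x‖ ^ 2) (A₁ : Measure E) :=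
    (measurable_norm.pow_const 2).aestronglyMeasurable
  have key : ∀ γm : Measure (E × E), IsCoupling γm A₁ A₂ →
      (∫ z, (inner ℝ z.1 z.2 : ℝ) ∂γm ≤ wip B₁ B₂
          + Real.sqrt (∫ z, ‖z.1 - z.2‖ ^ 2 ∂ρ₁) * Real.sqrt (∫ x, ‖x‖ ^ 2 ∂B₂)
          + Real.sqrt (∫ x, ‖x‖ ^ 2 ∂A₁) * Real.sqrt (∫ z, ‖z.1 - z.2‖ ^ 2 ∂ρ₂))
      ∧ (∫ z, (inner ℝ z.1 z.2 : ℝ) ∂γm ≤ wip B₁ B₂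
          + Real.sqrt (∫ z, ‖z.1 - z.2‖ ^ 2 ∂ρ₁) * Real.sqrt (∫ x, ‖x‖ ^ 2 ∂A₂)
          + Real.sqrt (∫ x, ‖x‖ ^ 2 ∂B₁) * Real.sqrt (∫ z, ‖z.1 - z.2‖ ^ 2 ∂ρ₂)) := by
    intro γm hγ
    obtain ⟨lam, hlamP, ha, hb, hc⟩ := glue hγ h1 h2
    haveI := hlamP
    -- coordinate maps
    have hm1 : Measurable (fun z : (E × E) × (E × E) => (z.1.1, z.2.1)) :=
      (measurable_fst.fst).prodMk (measurable_snd.fst)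
    have hm2 : Measurable (fun z : (E × E) × (E × E) => (z.1.2, z.2.2)) :=
      (measurable_fst.snd).prodMk (measurable_snd.snd)
    -- coordinate marginals
    have c11 : lam.map (fun z : (E × E) × (E × E) => z.1.1) = A₁ := by
      rw [show (fun z : (E × E) × (E × E) => z.1.1) = Prod.fst ∘ Prod.fst from rfl,
        ← Measure.map_map measurable_fst measurable_fst, ha, hγ.1]
    have c12 : lam.map (fun z : (E × E) × (E × E) => z.1.2) = A₂ := by
      rw [show (fun z : (E × E) × (E × E) => z.1.2) = Prod.snd ∘ Prod.fst from rfl,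
        ← Measure.map_map measurable_snd measurable_fst, ha, hγ.2]
    have c21 : lam.map (fun z : (E × E) × (E × E) => z.2.1) = B₁ := by
      rw [show (fun z : (E × E) × (E × E) => z.2.1)
          = Prod.snd ∘ (fun z : (E × E) × (E × E) => (z.1.1, z.2.1)) from rfl,
        ← Measure.map_map measurable_snd hm1, hb, h1.2]
    have c22 : lam.map (fun z : (E × E) × (E × E) => z.2.2) = B₂ := by
      rw [show (fun z : (E × E) × (E × E) => z.2.2)
          = Prod.snd ∘ (fun z : (E × E) × (E × E) => (z.1.2, z.2.2)) from rfl,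
        ← Measure.map_map measurable_snd hm2, hc, h2.2]
    -- integrability of coordinate second moments
    have i11 : Integrable (fun z : (E × E) × (E × E) => ‖z.1.1‖ ^ 2) lam :=
      integrable_comp_of_map (measurable_fst.fst) c11
        (measurable_norm.pow_const 2).aestronglyMeasurable hA₁
    have i12 : Integrable (fun z : (E × E) × (E × E) => ‖z.1.2‖ ^ 2) lam :=
      integrable_comp_of_map (measurable_fst.snd) c12
        (measurable_norm.pow_const 2).aestronglyMeasurable hA₂
    have i21 : Integrable (fun z : (E × E) × (E × E) => ‖z.2.1‖ ^ 2) lam :=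
      integrable_comp_of_map (measurable_snd.fst) c21
        (measurable_norm.pow_const 2).aestronglyMeasurable hB₁
    have i22 : Integrable (fun z : (E × E) × (E × E) => ‖z.2.2‖ ^ 2) lam :=
      integrable_comp_of_map (measurable_snd.snd) c22
        (measurable_norm.pow_const 2).aestronglyMeasurable hB₂
    -- integral identities
    have hsm_inner : AEStronglyMeasurable (fun w : E × E => (inner ℝ w.1 w.2 : ℝ)) γm :=
      (measurable_fst.aemeasurable.inner measurable_snd.aemeasurable).aestronglyMeasurable
    have eI : ∫ z, (inner ℝ z.1.1 z.1.2 : ℝ) ∂lam = ∫ z, (inner ℝ z.1 z.2 : ℝ) ∂γm :=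
      integral_comp_eq measurable_fst ha hsm_inner
    -- second marginal ν is a coupling of B₁ B₂
    have hν : IsCoupling (lam.map Prod.snd) B₁ B₂ := by
      constructor
      · rw [Measure.map_map measurable_fst measurable_snd]; exact c21
      · rw [Measure.map_map measurable_snd measurable_snd]; exact c22
    have hsm_inner' : AEStronglyMeasurable (fun w : E × E => (inner ℝ w.1 w.2 : ℝ))
        (lam.map Prod.snd) :=
      (measurable_fst.aemeasurable.inner measurable_snd.aemeasurable).aestronglyMeasurable
    have eJ : ∫ z, (inner ℝ z.2.1 z.2.2 : ℝ) ∂lam = ∫ w, (inner ℝ w.1 w.2 : ℝ) ∂(lam.map Prod.snd) :=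
      integral_comp_eq measurable_snd rfl hsm_inner'
    have hJle : ∫ w, (inner ℝ w.1 w.2 : ℝ) ∂(lam.map Prod.snd) ≤ wip B₁ B₂ :=
      le_wip hB₁ hB₂ hν
    -- difference integrals
    have hsm_sub : AEStronglyMeasurable (fun w : E × E => ‖w.1 - w.2‖ ^ 2) (ρ₁ : Measure (E × E)) :=
      ((measurable_fst.sub measurable_snd).norm.pow_const 2).aestronglyMeasurable
    have hsm_sub' : AEStronglyMeasurable (fun w : E × E => ‖w.1 - w.2‖ ^ 2) (ρ₂ : Measure (E × E)) :=
      ((measurable_fst.sub measurable_snd).norm.pow_const 2).aestronglyMeasurable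
    have eD1 : ∫ z, ‖z.1.1 - z.2.1‖ ^ 2 ∂lam = ∫ w, ‖w.1 - w.2‖ ^ 2 ∂ρ₁ :=
      integral_comp_eq hm1 hb hsm_sub
    have eD2 : ∫ z, ‖z.1.2 - z.2.2‖ ^ 2 ∂lam = ∫ w, ‖w.1 - w.2‖ ^ 2 ∂ρ₂ :=
      integral_comp_eq hm2 hc hsm_sub'
    have eM11 : ∫ z, ‖z.1.1‖ ^ 2 ∂lam = ∫ x, ‖x‖ ^ 2 ∂A₁ :=
      integral_comp_eq (measurable_fst.fst) c11 (measurable_norm.pow_const 2).aestronglyMeasurable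
    have eM12 : ∫ z, ‖z.1.2‖ ^ 2 ∂lam = ∫ x, ‖x‖ ^ 2 ∂A₂ :=
      integral_comp_eq (measurable_fst.snd) c12 (measurable_norm.pow_const 2).aestronglyMeasurable
    have eM21 : ∫ z, ‖z.2.1‖ ^ 2 ∂lam = ∫ x, ‖x‖ ^ 2 ∂B₁ :=
      integral_comp_eq (measurable_snd.fst) c21 (measurable_norm.pow_const 2).aestronglyMeasurable
    have eM22 : ∫ z, ‖z.2.2‖ ^ 2 ∂lam = ∫ x, ‖x‖ ^ 2 ∂B₂ :=
      integral_comp_eq (measurable_snd.snd) c22 (measurable_norm.pow_const 2).aestronglyMeasurable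
    constructor
    · have hcore := core_gen (ν := lam)
        (measurable_fst.fst.aemeasurable) (measurable_fst.snd.aemeasurable)
        (measurable_snd.fst.aemeasurable) (measurable_snd.snd.aemeasurable) i11 i12 i21 i22
      rw [eI, eJ, eD1, eD2, eM11, eM22] at hcore
      linarith [hJle, hcore]
    · have hcore := core_gen' (ν := lam)
        (measurable_fst.fst.aemeasurable) (measurable_fst.snd.aemeasurable)
        (measurable_snd.fst.aemeasurable) (measurable_snd.snd.aemeasurable) i11 i12 i21 i22
      rw [eI, eJ, eD1, eD2, eM12, eM21] at hcore
      linarith [hJle, hcore]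
  constructor
  · exact wip_le fun γm hγ => (key γm hγ).1
  · exact wip_le fun γm hγ => (key γm hγ).2

end Main
section Final

open ProbabilityTheory

variable {d : ℕ}

local notation "E" => EuclideanSpace ℝ (Fin d)

lemma w_swap (π : Measure (E × E)) :
    ∫ z, ‖z.1 - z.2‖ ^ 2 ∂(π.map Prod.swap) = ∫ z, ‖z.1 - z.2‖ ^ 2 ∂π := by
  have hsm : AEStronglyMeasurable (fun w : E × E => ‖w.1 - w.2‖ ^ 2) (π.map Prod.swap) :=
    ((measurable_fst.sub measurable_snd).norm.pow_const 2).aestronglyMeasurable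
  rw [integral_map measurable_swap.aemeasurable hsm]
  refine integral_congr_ae (Filter.Eventually.of_forall fun z => ?_)
  simp [norm_sub_rev]

lemma swap_coupling {P Q : Measure E} {π : Measure (E × E)} (h : IsCoupling π P Q) :
    IsCoupling (π.map Prod.swap) Q P := by
  constructor
  · rw [Measure.map_map measurable_fst measurable_swap]; exact h.2
  · rw [Measure.map_map measurable_snd measurable_swap]; exact h.1

lemma eps_bound {P₁ P₂ Q₁ Q₂ : Measure E} [IsProbabilityMeasure P₁] [IsProbabilityMeasure P₂]
    [IsProbabilityMeasure Q₁] [IsProbabilityMeasure Q₂] {a c₁ c₂ : ℝ}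
    (hc₁ : 0 ≤ c₁) (hc₂ : 0 ≤ c₂)
    (h : ∀ (π₁ π₂ : Measure (E × E)), IsCoupling π₁ P₁ Q₁ → IsCoupling π₂ P₂ Q₂ →
      a ≤ Real.sqrt (∫ z, ‖z.1 - z.2‖ ^ 2 ∂π₁) * c₁
        + c₂ * Real.sqrt (∫ z, ‖z.1 - z.2‖ ^ 2 ∂π₂)) :
    a ≤ Real.sqrt (W2sq P₁ Q₁) * c₁ + c₂ * Real.sqrt (W2sq P₂ Q₂) := by
  refine le_of_forall_pos_le_add fun ε hε => ?_
  set δ := (ε / (c₁ + c₂ + 1)) ^ 2 with hδdef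
  have hδ : 0 < δ := by positivity
  obtain ⟨π₁, hπ₁, hw₁⟩ := exists_coupling_W2sq_lt P₁ Q₁ hδ
  obtain ⟨π₂, hπ₂, hw₂⟩ := exists_coupling_W2sq_lt P₂ Q₂ hδ
  have hW₁ := W2sq_nonneg P₁ Q₁
  have hW₂ := W2sq_nonneg P₂ Q₂
  have hs₁ : Real.sqrt (∫ z, ‖z.1 - z.2‖ ^ 2 ∂π₁) ≤ Real.sqrt (W2sq P₁ Q₁) + Real.sqrt δ :=
    (Real.sqrt_le_sqrt hw₁.le).trans (my_sqrt_add_le hW₁ hδ.le)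
  have hs₂ : Real.sqrt (∫ z, ‖z.1 - z.2‖ ^ 2 ∂π₂) ≤ Real.sqrt (W2sq P₂ Q₂) + Real.sqrt δ :=
    (Real.sqrt_le_sqrt hw₂.le).trans (my_sqrt_add_le hW₂ hδ.le)
  have hsδ : Real.sqrt δ = ε / (c₁ + c₂ + 1) := Real.sqrt_sq (by positivity)
  have ha := h π₁ π₂ hπ₁ hπ₂
  have hfrac : Real.sqrt δ * (c₁ + c₂) ≤ ε := by
    rw [hsδ, div_mul_eq_mul_div, div_le_iff₀ (by positivity)]
    nlinarith
  have m₁ := mul_le_mul_of_nonneg_right hs₁ hc₁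
  have m₂ := mul_le_mul_of_nonneg_left hs₂ hc₂
  nlinarith [m₁, m₂, hfrac, ha]

lemma wip_diff_le {P₁ P₂ Q₁ Q₂ : Measure E} [IsProbabilityMeasure P₁] [IsProbabilityMeasure P₂]
    [IsProbabilityMeasure Q₁] [IsProbabilityMeasure Q₂]
    (hP₁ : Integrable (fun x => ‖x‖ ^ 2) P₁) (hP₂ : Integrable (fun x => ‖x‖ ^ 2) P₂)
    (hQ₁ : Integrable (fun x => ‖x‖ ^ 2) Q₁) (hQ₂ : Integrable (fun x => ‖x‖ ^ 2) Q₂) :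
    |wip P₁ P₂ - wip Q₁ Q₂|
      ≤ Real.sqrt (∫ x, ‖x‖ ^ 2 ∂Q₂) * Real.sqrt (W2sq P₁ Q₁)
        + Real.sqrt (∫ x, ‖x‖ ^ 2 ∂P₁) * Real.sqrt (W2sq P₂ Q₂) := by
  rw [abs_sub_le_iff]
  constructor
  · have h := eps_bound (P₁ := P₁) (P₂ := P₂) (Q₁ := Q₁) (Q₂ := Q₂)
      (a := wip P₁ P₂ - wip Q₁ Q₂)
      (c₁ := Real.sqrt (∫ x, ‖x‖ ^ 2 ∂Q₂)) (c₂ := Real.sqrt (∫ x, ‖x‖ ^ 2 ∂P₁))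
      (Real.sqrt_nonneg _) (Real.sqrt_nonneg _) ?_
    · linarith [h, mul_comm (Real.sqrt (W2sq P₁ Q₁)) (Real.sqrt (∫ x, ‖x‖ ^ 2 ∂Q₂))]
    · intro π₁ π₂ hπ₁ hπ₂
      have := (one_side hP₁ hP₂ hQ₁ hQ₂ hπ₁ hπ₂).1
      linarith
  · have h := eps_bound (P₁ := P₁) (P₂ := P₂) (Q₁ := Q₁) (Q₂ := Q₂)
      (a := wip Q₁ Q₂ - wip P₁ P₂)
      (c₁ := Real.sqrt (∫ x, ‖x‖ ^ 2 ∂Q₂)) (c₂ := Real.sqrt (∫ x, ‖x‖ ^ 2 ∂P₁))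
      (Real.sqrt_nonneg _) (Real.sqrt_nonneg _) ?_
    · linarith [h, mul_comm (Real.sqrt (W2sq P₁ Q₁)) (Real.sqrt (∫ x, ‖x‖ ^ 2 ∂Q₂))]
    · intro π₁ π₂ hπ₁ hπ₂
      have hone := (one_side hQ₁ hQ₂ hP₁ hP₂ (swap_coupling hπ₁) (swap_coupling hπ₂)).2
      rw [w_swap π₁, w_swap π₂] at hone
      linarith

end Final

theorem stmt_5 {d : ℕ} {Ω : Type*} [MeasurableSpace Ω] (μ : Measure Ω)
    [IsProbabilityMeasure μ]
    (X₁ X₂ Y₁ Y₂ : Ω → EuclideanSpace ℝ (Fin d))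
    (hX₁ : Measurable X₁) (hX₂ : Measurable X₂) (hY₁ : Measurable Y₁) (hY₂ : Measurable Y₂)
    (hX₁2 : Integrable (fun ω => ‖X₁ ω‖ ^ 2) μ) (hX₂2 : Integrable (fun ω => ‖X₂ ω‖ ^ 2) μ)
    (hY₁2 : Integrable (fun ω => ‖Y₁ ω‖ ^ 2) μ) (hY₂2 : Integrable (fun ω => ‖Y₂ ω‖ ^ 2) μ) :
    |wip (μ.map X₁) (μ.map X₂) - wip (μ.map Y₁) (μ.map Y₂)|
      ≤ Real.sqrt (∫ ω, ‖Y₂ ω‖ ^ 2 ∂μ) * Real.sqrt (W2sq (μ.map X₁) (μ.map Y₁))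
        + Real.sqrt (∫ ω, ‖X₁ ω‖ ^ 2 ∂μ) * Real.sqrt (W2sq (μ.map X₂) (μ.map Y₂)) := by
  haveI : IsProbabilityMeasure (μ.map X₁) := Measure.isProbabilityMeasure_map hX₁.aemeasurable
  haveI : IsProbabilityMeasure (μ.map X₂) := Measure.isProbabilityMeasure_map hX₂.aemeasurable
  haveI : IsProbabilityMeasure (μ.map Y₁) := Measure.isProbabilityMeasure_map hY₁.aemeasurable
  haveI : IsProbabilityMeasure (μ.map Y₂) := Measure.isProbabilityMeasure_map hY₂.aemeasurable
  have hsm : ∀ (ν : Measure (EuclideanSpace ℝ (Fin d))),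
      AEStronglyMeasurable (fun x : EuclideanSpace ℝ (Fin d) => ‖x‖ ^ 2) ν :=
    fun ν => (measurable_norm.pow_const 2).aestronglyMeasurable
  have hP₁ : Integrable (fun x => ‖x‖ ^ 2) (μ.map X₁) :=
    (integrable_map_measure (hsm _) hX₁.aemeasurable).mpr hX₁2
  have hP₂ : Integrable (fun x => ‖x‖ ^ 2) (μ.map X₂) :=
    (integrable_map_measure (hsm _) hX₂.aemeasurable).mpr hX₂2
  have hQ₁ : Integrable (fun x => ‖x‖ ^ 2) (μ.map Y₁) :=
    (integrable_map_measure (hsm _) hY₁.aemeasurable).mpr hY₁2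
  have hQ₂ : Integrable (fun x => ‖x‖ ^ 2) (μ.map Y₂) :=
    (integrable_map_measure (hsm _) hY₂.aemeasurable).mpr hY₂2
  have e₁ : ∫ ω, ‖Y₂ ω‖ ^ 2 ∂μ = ∫ x, ‖x‖ ^ 2 ∂(μ.map Y₂) :=
    (integral_map hY₂.aemeasurable (hsm _)).symm
  have e₂ : ∫ ω, ‖X₁ ω‖ ^ 2 ∂μ = ∫ x, ‖x‖ ^ 2 ∂(μ.map X₁) :=
    (integral_map hX₁.aemeasurable (hsm _)).symm
  rw [e₁, e₂]
  exact wip_diff_le hP₁ hP₂ hQ₁ hQ₂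
end
end

section
/- Let G = (V, E) with V = {1,…,L} be a simple undirected acyclic graph. Let (𝒳_i, Ω_i, ν_i), i ∈ V, be probability spaces, and for each edge (i,j) ∈ E let ξ_{i,j} be a probability measure on 𝒳_i × 𝒳_j whose marginals are ν_i and ν_j. Then there exists a probability measure ρ on the product ∏_{i∈V} 𝒳_i such that the i-th marginal of ρ is ν_i for all i ∈ V, and the (i,j)-marginal of ρ equals ξ_{i,j} for all (i,j) ∈ E. -/
open MeasureTheory ProbabilityTheory SimpleGraph

lemma exists_leaf {L : ℕ} {G : SimpleGraph (Fin L)} (hG : G.IsAcyclic)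
    {S : Finset (Fin L)} (hS : S.Nonempty) :
    ∃ v ∈ S, ∀ a ∈ S, ∀ b ∈ S, G.Adj a v → G.Adj b v → a = b := by
  classical
  set P : Set ℕ := {n | ∃ (a b : Fin L) (p : G.Walk a b), p.IsPath ∧
      (∀ x ∈ p.support, x ∈ S) ∧ p.length = n} with hP
  obtain ⟨v0, hv0⟩ := hS
  have hPne : P.Nonempty := ⟨0, v0, v0, Walk.nil, Walk.IsPath.nil, by simp [hv0], rfl⟩
  have hPbdd : BddAbove P := by
    refine ⟨L, fun n hn => ?_⟩
    obtain ⟨a, b, p, hp, -, hlen⟩ := hn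
    have := hp.length_lt
    simp only [Fintype.card_fin] at this
    omega
  obtain ⟨a, b, p, hp, hsupp, hlen⟩ := Nat.sSup_mem hPne hPbdd
  refine ⟨a, hsupp a p.start_mem_support, ?_⟩
  have key : ∀ c ∈ S, G.Adj c a → ∃ rest, p.support = a :: c :: rest := by
    intro c hc hca
    have hcs : c ∈ p.support := by
      by_contra hcs
      have hq : (Walk.cons hca p).IsPath := (Walk.cons_isPath_iff _ _).2 ⟨hp, hcs⟩
      have hmem : (Walk.cons hca p).length ∈ P := by
        refine ⟨c, b, _, hq, ?_, rfl⟩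
        intro x hx
        simp only [Walk.support_cons, List.mem_cons] at hx
        rcases hx with rfl | hx
        · exact hc
        · exact hsupp x hx
      have := le_csSup hPbdd hmem
      simp only [Walk.length_cons, hlen] at this
      omega
    have h1 : (p.takeUntil c hcs).IsPath := hp.takeUntil hcs
    have h2 := isAcyclic_iff_path_unique.mp hG ⟨p.takeUntil c hcs, h1⟩ (Path.singleton hca.symm)
    have h2' : p.takeUntil c hcs = Walk.cons hca.symm Walk.nil := congrArg Subtype.val h2
    have hspec := congrArg Walk.support (p.take_spec hcs)
    rw [Walk.support_append, h2'] at hspec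
    simp only [Walk.support_cons, Walk.support_nil] at hspec
    exact ⟨(p.dropUntil c hcs).support.tail, hspec.symm⟩
  intro x hx y hy hxa hya
  obtain ⟨r1, h1⟩ := key x hx hxa
  obtain ⟨r2, h2⟩ := key y hy hya
  rw [h1] at h2
  exact (List.cons.injEq _ _ _ _).mp ((List.cons.injEq _ _ _ _).mp h2).2 |>.1

lemma map_compProd_comap {α β γ : Type*} [MeasurableSpace α] [MeasurableSpace β]
    [MeasurableSpace γ] (μ : Measure α) [SFinite μ] (κ : Kernel β γ) [IsSFiniteKernel κ]
    {g : α → β} (hg : Measurable g) :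
    (μ.compProd (κ.comap g hg)).map (Prod.map g id) = (μ.map g).compProd κ := by
  ext s hs
  rw [Measure.map_apply (hg.prodMap measurable_id) hs,
    Measure.compProd_apply (hs.preimage (hg.prodMap measurable_id)),
    Measure.compProd_apply hs, lintegral_map _ hg]
  · simp only [Kernel.comap_apply]
    rfl
  · exact Kernel.measurable_kernel_prodMk_left hs

lemma key_lemma (L : ℕ) (G : SimpleGraph (Fin L)) (hG : G.IsAcyclic)
    (𝒳 : Fin L → Type*) [∀ i, MeasurableSpace (𝒳 i)] [∀ i, StandardBorelSpace (𝒳 i)]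
    [∀ i, Nonempty (𝒳 i)]
    (ν : ∀ i, Measure (𝒳 i)) [∀ i, IsProbabilityMeasure (ν i)]
    (ξ : ∀ i j, Measure (𝒳 i × 𝒳 j))
    (hξmarg : ∀ i j, G.Adj i j →
      (ξ i j).map Prod.fst = ν i ∧ (ξ i j).map Prod.snd = ν j)
    (hξswap : ∀ i j, G.Adj i j → (ξ i j).map Prod.swap = ξ j i)
    (S : Finset (Fin L)) :
    ∃ ρ : Measure (∀ i, 𝒳 i), IsProbabilityMeasure ρ ∧
      (∀ i ∈ S, ρ.map (fun f => f i) = ν i) ∧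
      (∀ i ∈ S, ∀ j ∈ S, G.Adj i j → ρ.map (fun f => (f i, f j)) = ξ i j) := by
  classical
  induction S using Finset.strongInduction with
  | _ S IH => ?_
  rcases S.eq_empty_or_nonempty with rfl | hS
  · exact ⟨Measure.pi ν, inferInstance, by simp, by simp⟩
  obtain ⟨v, hv, hleaf⟩ := exists_leaf hG hS
  obtain ⟨ρ', hρ'prob, hρ'1, hρ'2⟩ := IH (S.erase v) (Finset.erase_ssubset hv)
  haveI := hρ'prob
  have hξprob : ∀ i j, G.Adj i j → IsProbabilityMeasure (ξ i j) := by
    intro i j hij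
    constructor
    have h1 : ((ξ i j).map Prod.fst) Set.univ = 1 := by
      rw [(hξmarg i j hij).1]; exact measure_univ
    rwa [Measure.map_apply measurable_fst MeasurableSet.univ, Set.preimage_univ] at h1
  set m : ((∀ i, 𝒳 i) × 𝒳 v) → (∀ i, 𝒳 i) := fun p => Function.update p.1 v p.2 with hm_def
  have hm : Measurable m := measurable_update'
  have hmeas_ev : ∀ i : Fin L, Measurable fun f : ∀ i, 𝒳 i => f i := fun i => measurable_pi_apply i
  have hmeas_pair : ∀ i j : Fin L, Measurable fun f : ∀ i, 𝒳 i => (f i, f j) :=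
    fun i j => (hmeas_ev i).prodMk (hmeas_ev j)
  -- shared facts for any Markov kernel η
  have common : ∀ (η : Kernel (∀ i, 𝒳 i) (𝒳 v)) (hη : IsMarkovKernel η),
      IsProbabilityMeasure ((ρ'.compProd η).map m) ∧
      (∀ i, i ≠ v → ((ρ'.compProd η).map m).map (fun f => f i) = ρ'.map (fun f => f i)) ∧
      (∀ i j, i ≠ v → j ≠ v →
        ((ρ'.compProd η).map m).map (fun f => (f i, f j)) = ρ'.map (fun f => (f i, f j))) := by
    intro η hη
    haveI := hη
    have hfst : (ρ'.compProd η).map Prod.fst = ρ' := Measure.fst_compProd ρ' η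
    refine ⟨Measure.isProbabilityMeasure_map hm.aemeasurable, ?_, ?_⟩
    · intro i hi
      rw [Measure.map_map (hmeas_ev i) hm]
      have hc : ((fun f : ∀ i, 𝒳 i => f i) ∘ m) = (fun f : ∀ i, 𝒳 i => f i) ∘ Prod.fst := by
        funext p
        simp only [Function.comp_apply, hm_def, Function.update_of_ne hi]
      rw [hc, ← Measure.map_map (hmeas_ev i) measurable_fst, hfst]
    · intro i j hi hj
      rw [Measure.map_map (hmeas_pair i j) hm]
      have hc : ((fun f : ∀ i, 𝒳 i => (f i, f j)) ∘ m)
          = (fun f : ∀ i, 𝒳 i => (f i, f j)) ∘ Prod.fst := by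
        funext p
        simp only [Function.comp_apply, hm_def, Function.update_of_ne hi,
          Function.update_of_ne hj]
      rw [hc, ← Measure.map_map (hmeas_pair i j) measurable_fst, hfst]
  by_cases hnb : ∃ u ∈ S, G.Adj u v
  · -- v has a (unique) neighbor u in S
    obtain ⟨u, hu, huv⟩ := hnb
    have hune : u ≠ v := huv.ne
    have huS' : u ∈ S.erase v := Finset.mem_erase.2 ⟨hune, hu⟩
    haveI := hξprob u v huv
    set κ : Kernel (𝒳 u) (𝒳 v) := (ξ u v).condKernel with hκ_def
    set η : Kernel (∀ i, 𝒳 i) (𝒳 v) := κ.comap (fun f => f u) (hmeas_ev u) with hη_def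
    haveI : IsMarkovKernel η := by rw [hη_def]; infer_instance
    obtain ⟨hprob, hone, hpair⟩ := common η inferInstance
    set ρ : Measure (∀ i, 𝒳 i) := (ρ'.compProd η).map m with hρ_def
    have hpair_uv : ρ.map (fun f => (f u, f v)) = ξ u v := by
      rw [hρ_def, Measure.map_map (hmeas_pair u v) hm]
      have hc : ((fun f : ∀ i, 𝒳 i => (f u, f v)) ∘ m)
          = Prod.map (fun f : ∀ i, 𝒳 i => f u) id := by
        funext p
        simp only [Function.comp_apply, hm_def, Prod.map, id_eq,
          Function.update_of_ne hune, Function.update_self]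
      rw [hc, hη_def, map_compProd_comap ρ' κ (hmeas_ev u), hρ'1 u huS']
      have hfst_eq : (ξ u v).fst = ν u := (hξmarg u v huv).1
      rw [hκ_def, ← hfst_eq]
      exact Measure.disintegrate (ξ u v) (ξ u v).condKernel
    have hv_marg : ρ.map (fun f => f v) = ν v := by
      have hc : (fun f : ∀ i, 𝒳 i => f v)
          = Prod.snd ∘ (fun f : ∀ i, 𝒳 i => (f u, f v)) := rfl
      rw [hc, ← Measure.map_map measurable_snd (hmeas_pair u v), hpair_uv]
      exact (hξmarg u v huv).2
    refine ⟨ρ, hprob, ?_, ?_⟩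
    · intro i hi
      by_cases hiv : i = v
      · subst hiv; exact hv_marg
      · rw [hρ_def, hone i hiv, hρ'1 i (Finset.mem_erase.2 ⟨hiv, hi⟩)]
    · intro i hi j hj hij
      by_cases hiv : i = v
      · subst hiv
        have hju : j = u := hleaf j hj u hu hij.symm huv
        rw [hju]
        have hc : (fun f : ∀ k, 𝒳 k => (f i, f u)) = Prod.swap ∘ (fun f => (f u, f i)) := rfl
        rw [hc, ← Measure.map_map measurable_swap (hmeas_pair u i), hpair_uv]
        exact hξswap u i huv
      · by_cases hjv : j = v
        · subst hjv
          have hiu : i = u := hleaf i hi u hu hij huv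
          subst hiu
          exact hpair_uv
        · rw [hρ_def, hpair i j hiv hjv,
            hρ'2 i (Finset.mem_erase.2 ⟨hiv, hi⟩) j (Finset.mem_erase.2 ⟨hjv, hj⟩) hij]
  · -- v has no neighbor in S
    push_neg at hnb
    set η : Kernel (∀ i, 𝒳 i) (𝒳 v) := Kernel.const _ (ν v) with hη_def
    haveI : IsMarkovKernel η := by rw [hη_def]; infer_instance
    obtain ⟨hprob, hone, hpair⟩ := common η inferInstance
    set ρ : Measure (∀ i, 𝒳 i) := (ρ'.compProd η).map m with hρ_def
    have hv_marg : ρ.map (fun f => f v) = ν v := by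
      rw [hρ_def, Measure.map_map (hmeas_ev v) hm]
      have hc : ((fun f : ∀ i, 𝒳 i => f v) ∘ m) = Prod.snd := by
        funext p
        simp only [Function.comp_apply, hm_def, Function.update_self]
      rw [hc, hη_def, Measure.compProd_const]
      have : (ρ'.prod (ν v)).snd = ν v := Measure.snd_prod
      exact this
    refine ⟨ρ, hprob, ?_, ?_⟩
    · intro i hi
      by_cases hiv : i = v
      · subst hiv; exact hv_marg
      · rw [hρ_def, hone i hiv, hρ'1 i (Finset.mem_erase.2 ⟨hiv, hi⟩)]
    · intro i hi j hj hij
      by_cases hiv : i = v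
      · subst hiv; exact absurd hij.symm (hnb j hj)
      · by_cases hjv : j = v
        · subst hjv; exact absurd hij (hnb i hi)
        · rw [hρ_def, hpair i j hiv hjv,
            hρ'2 i (Finset.mem_erase.2 ⟨hiv, hi⟩) j (Finset.mem_erase.2 ⟨hjv, hj⟩) hij]

/-- Gluing lemma for probability measures along a simple undirected acyclic graph. -/
theorem stmt_8 (L : ℕ) (G : SimpleGraph (Fin L)) (hG : G.IsAcyclic)
    (𝒳 : Fin L → Type*) [∀ i, MeasurableSpace (𝒳 i)] [∀ i, StandardBorelSpace (𝒳 i)]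
    [∀ i, Nonempty (𝒳 i)]
    (ν : ∀ i, Measure (𝒳 i)) [∀ i, IsProbabilityMeasure (ν i)]
    (ξ : ∀ i j, Measure (𝒳 i × 𝒳 j))
    (hξmarg : ∀ i j, G.Adj i j →
      (ξ i j).map Prod.fst = ν i ∧ (ξ i j).map Prod.snd = ν j)
    (hξswap : ∀ i j, G.Adj i j → (ξ i j).map Prod.swap = ξ j i) :
    ∃ ρ : Measure (∀ i, 𝒳 i), IsProbabilityMeasure ρ ∧
      (∀ i, ρ.map (fun f => f i) = ν i) ∧
      (∀ i j, G.Adj i j → ρ.map (fun f => (f i, f j)) = ξ i j) := by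
  obtain ⟨ρ, h1, h2, h3⟩ := key_lemma L G hG 𝒳 ν ξ hξmarg hξswap Finset.univ
  exact ⟨ρ, h1, fun i => h2 i (Finset.mem_univ i),
    fun i j hij => h3 i (Finset.mem_univ i) j (Finset.mem_univ j) hij⟩
end

section
/- Let X, Y be independent ℝ^d-valued random vectors with finite second moments, with X absolutely continuous with density f_X satisfying f_X(x) ≥ γ₁·exp(−γ₂‖x‖²) for all ‖x‖ ≥ M₂ := E‖Y‖², where γ₁, γ₂ > 0 and M₂ > 1. Then V := X + Y is absolutely continuous with a density f_V satisfying f_V(v) ≥ K₁·exp(−2γ₂‖v‖²) for all ‖v‖ ≥ 2M₂, where K₁ = γ₁·exp(−2γ₂M₂²)·(1 − 1/M₂) > 0. -/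
open MeasureTheory ProbabilityTheory
open scoped ENNReal

lemma stmt12_conv_density {d : ℕ} (g : EuclideanSpace ℝ (Fin d) → ℝ≥0∞) (hg : Measurable g)
    (ν : Measure (EuclideanSpace ℝ (Fin d))) [IsFiniteMeasure ν] :
    ((volume.withDensity g).prod ν).map (fun p => p.1 + p.2)
      = volume.withDensity (fun v => ∫⁻ y, g (v - y) ∂ν) := by
  let E := EuclideanSpace ℝ (Fin d)
  have hadd : Measurable fun p : E × E => p.1 + p.2 := measurable_add
  ext s hs
  rw [Measure.map_apply hadd hs, Measure.prod_apply (hadd hs),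
    lintegral_withDensity_eq_lintegral_mul volume hg
      (measurable_measure_prodMk_left (hadd hs)),
    withDensity_apply _ hs]
  have h1 : ∀ x : E, ν (Prod.mk x ⁻¹' ((fun p : E × E => p.1 + p.2) ⁻¹' s))
      = ∫⁻ y, s.indicator (fun _ => (1 : ℝ≥0∞)) (x + y) ∂ν := by
    intro x
    have hpre : Prod.mk x ⁻¹' ((fun p : E × E => p.1 + p.2) ⁻¹' s) = (fun y => x + y) ⁻¹' s := rfl
    rw [hpre, ← lintegral_indicator_one (s := (fun y => x + y) ⁻¹' s) ((measurable_const_add x) hs)]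
    refine lintegral_congr fun y => ?_
    by_cases h : x + y ∈ s <;> simp [h]
  calc ∫⁻ x, (g * fun x => ν (Prod.mk x ⁻¹' ((fun p : E × E => p.1 + p.2) ⁻¹' s))) x
      = ∫⁻ x, ∫⁻ y, g x * s.indicator (fun _ => (1:ℝ≥0∞)) (x + y) ∂ν := by
        refine lintegral_congr fun x => ?_
        simp only [Pi.mul_apply, h1]
        refine (lintegral_const_mul _ ?_).symm
        exact (measurable_one.indicator hs).comp (measurable_const_add x)
    _ = ∫⁻ y, ∫⁻ x, g x * s.indicator (fun _ => (1:ℝ≥0∞)) (x + y) ∂volume ∂ν :=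
        lintegral_lintegral_swap
          (by exact ((hg.comp measurable_fst).mul
            ((measurable_one.indicator hs).comp measurable_add)).aemeasurable)
    _ = ∫⁻ y, ∫⁻ v, g (v - y) * s.indicator (fun _ => (1:ℝ≥0∞)) v ∂volume ∂ν := by
        refine lintegral_congr fun y => ?_
        rw [← lintegral_add_right_eq_self
          (fun v => g (v - y) * s.indicator (fun _ => (1:ℝ≥0∞)) v) y]
        refine lintegral_congr fun x => ?_
        simp
    _ = ∫⁻ v, ∫⁻ y, g (v - y) * s.indicator (fun _ => (1:ℝ≥0∞)) v ∂ν ∂volume :=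
        (lintegral_lintegral_swap
          (by exact ((hg.comp (measurable_fst.sub measurable_snd)).mul
            ((measurable_one.indicator hs).comp measurable_fst)).aemeasurable)).symm
    _ = ∫⁻ v in s, ∫⁻ y, g (v - y) ∂ν ∂volume := by
        rw [← lintegral_indicator hs]
        refine lintegral_congr fun v => ?_
        by_cases hv : v ∈ s <;> simp [hv]
/-- Anti-concentration is preserved under independent convolution. -/
theorem stmt_12 {d : ℕ} {Ω : Type*} [MeasurableSpace Ω] (μ : Measure Ω)
    [IsProbabilityMeasure μ]
    (X Y : Ω → EuclideanSpace ℝ (Fin d)) (hXm : Measurable X) (hYm : Measurable Y)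
    (hindep : IndepFun X Y μ)
    (hX2 : Integrable (fun ω => ‖X ω‖ ^ 2) μ) (hY2 : Integrable (fun ω => ‖Y ω‖ ^ 2) μ)
    (fX : EuclideanSpace ℝ (Fin d) → ℝ)
    (hfX : μ.map X = volume.withDensity (fun x => ENNReal.ofReal (fX x)))
    (γ₁ γ₂ : ℝ) (hγ₁ : 0 < γ₁) (hγ₂ : 0 < γ₂)
    (hM : 1 < ∫ ω, ‖Y ω‖ ^ 2 ∂μ)
    (hanti : ∀ x : EuclideanSpace ℝ (Fin d), (∫ ω, ‖Y ω‖ ^ 2 ∂μ) ≤ ‖x‖ →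
      γ₁ * Real.exp (-γ₂ * ‖x‖ ^ 2) ≤ fX x) :
    ∃ fV : EuclideanSpace ℝ (Fin d) → ℝ,
      μ.map (fun ω => X ω + Y ω) = volume.withDensity (fun v => ENNReal.ofReal (fV v)) ∧
      ∀ v : EuclideanSpace ℝ (Fin d), 2 * (∫ ω, ‖Y ω‖ ^ 2 ∂μ) ≤ ‖v‖ →
        γ₁ * Real.exp (-2 * γ₂ * (∫ ω, ‖Y ω‖ ^ 2 ∂μ) ^ 2) * (1 - 1 / ∫ ω, ‖Y ω‖ ^ 2 ∂μ)
            * Real.exp (-2 * γ₂ * ‖v‖ ^ 2) ≤ fV v := by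
  classical
  set M : ℝ := ∫ ω, ‖Y ω‖ ^ 2 ∂μ with hMdef
  have hM0 : 0 < M := lt_trans one_pos hM
  set ν : Measure (EuclideanSpace ℝ (Fin d)) := μ.map Y with hν
  have hPY : IsProbabilityMeasure ν := Measure.isProbabilityMeasure_map hYm.aemeasurable
  have hPX : IsProbabilityMeasure (μ.map X) := Measure.isProbabilityMeasure_map hXm.aemeasurable
  have habs : μ.map X ≪ volume := by
    rw [hfX]; exact withDensity_absolutelyContinuous _ _
  set g : EuclideanSpace ℝ (Fin d) → ℝ≥0∞ := (μ.map X).rnDeriv volume with hgdef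
  have hg : Measurable g := Measure.measurable_rnDeriv _ _
  have hgd : volume.withDensity g = μ.map X := Measure.withDensity_rnDeriv_eq _ _ habs
  -- the measurable lower bound φ
  have hSm : MeasurableSet {x : EuclideanSpace ℝ (Fin d) | M ≤ ‖x‖} :=
    measurableSet_le measurable_const measurable_norm
  set φ : EuclideanSpace ℝ (Fin d) → ℝ≥0∞ :=
    fun x => Set.indicator {x : EuclideanSpace ℝ (Fin d) | M ≤ ‖x‖}
      (fun x => ENNReal.ofReal (γ₁ * Real.exp (-γ₂ * ‖x‖ ^ 2))) x with hφdef
  have hφm : Measurable φ := by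
    refine Measurable.indicator ?_ hSm
    exact ((Real.measurable_exp.comp ((measurable_norm.pow_const 2).const_mul (-γ₂))).const_mul
      γ₁).ennreal_ofReal
  have hφ_le : ∀ x, φ x ≤ ENNReal.ofReal (fX x) := by
    intro x
    by_cases hx : M ≤ ‖x‖
    · have hx' : φ x = ENNReal.ofReal (γ₁ * Real.exp (-γ₂ * ‖x‖ ^ 2)) :=
        Set.indicator_of_mem (show x ∈ {x : EuclideanSpace ℝ (Fin d) | M ≤ ‖x‖} from hx) _
      rw [hx']
      exact ENNReal.ofReal_le_ofReal (hanti x hx)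
    · have hx' : φ x = 0 := Set.indicator_of_notMem (show x ∉ {x : EuclideanSpace ℝ (Fin d) | M ≤ ‖x‖} from hx) _
      rw [hx']
      exact zero_le
  have hφg : φ ≤ᵐ[volume] g := by
    refine ae_le_of_forall_setLIntegral_le_of_sigmaFinite hφm fun s hs _ => ?_
    calc ∫⁻ x in s, φ x ∂volume ≤ ∫⁻ x in s, ENNReal.ofReal (fX x) ∂volume :=
          lintegral_mono fun x => hφ_le x
      _ = (volume.withDensity fun x => ENNReal.ofReal (fX x)) s := (withDensity_apply _ hs).symm
      _ = (μ.map X) s := by rw [hfX]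
      _ = (volume.withDensity g) s := by rw [hgd]
      _ = ∫⁻ x in s, g x ∂volume := withDensity_apply _ hs
  obtain ⟨N, hNsub, hNm, hN0⟩ :=
    exists_measurable_superset_of_null (ae_iff.mp hφg)
  -- the density of V
  set gV : EuclideanSpace ℝ (Fin d) → ℝ≥0∞ := fun v => ∫⁻ y, g (v - y) ∂ν with hgVdef
  have hgVm : Measurable gV := by
    exact Measurable.lintegral_prod_right' (ν := ν)
      (by exact hg.comp (measurable_fst.sub measurable_snd))
  have hmap : μ.map (fun ω => X ω + Y ω) = volume.withDensity gV := by
    have hpair : μ.map (fun ω => (X ω, Y ω)) = (μ.map X).prod ν :=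
      (indepFun_iff_map_prod_eq_prod_map_map hXm.aemeasurable hYm.aemeasurable).mp hindep
    have h1 : μ.map (fun ω => X ω + Y ω)
        = ((μ.map X).prod ν).map (fun p => p.1 + p.2) := by
      rw [← hpair, Measure.map_map measurable_add (hXm.prodMk hYm)]
      rfl
    rw [h1, ← hgd, stmt12_conv_density g hg ν]
  -- Markov's inequality
  have hS2m : MeasurableSet {y : EuclideanSpace ℝ (Fin d) | ‖y‖ ≤ M} :=
    measurableSet_le measurable_norm measurable_const
  have hmarkov : ENNReal.ofReal (1 - 1 / M) ≤ ν {y | ‖y‖ ≤ M} := by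
    have hcm : ν {y : EuclideanSpace ℝ (Fin d) | ‖y‖ ≤ M}ᶜ ≤ ENNReal.ofReal (1 / M) := by
      have h1 : ν {y : EuclideanSpace ℝ (Fin d) | ‖y‖ ≤ M}ᶜ = μ {ω | ¬ ‖Y ω‖ ≤ M} := by
        rw [hν, Measure.map_apply hYm hS2m.compl]
        rfl
      have h2 : {ω | ¬ ‖Y ω‖ ≤ M} ⊆ {ω | M ^ 2 ≤ ‖Y ω‖ ^ 2} := by
        intro ω hω
        have h : M ≤ ‖Y ω‖ := le_of_lt (lt_of_not_ge hω)
        exact pow_le_pow_left₀ hM0.le h 2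
      have h3 := mul_meas_ge_le_integral_of_nonneg
        (ae_of_all μ fun ω => sq_nonneg ‖Y ω‖) hY2 (M ^ 2)
      have hfin : μ {ω | M ^ 2 ≤ ‖Y ω‖ ^ 2} ≠ ∞ := measure_ne_top _ _
      have htnn : (0:ℝ) ≤ (μ {ω | M ^ 2 ≤ ‖Y ω‖ ^ 2}).toReal := ENNReal.toReal_nonneg
      have h4 : (μ {ω | M ^ 2 ≤ ‖Y ω‖ ^ 2}).toReal ≤ 1 / M := by
        rw [le_div_iff₀ hM0]
        have h3' : M ^ 2 * (μ {ω | M ^ 2 ≤ ‖Y ω‖ ^ 2}).toReal ≤ M := h3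
        nlinarith [h3', hM0]
      calc ν {y : EuclideanSpace ℝ (Fin d) | ‖y‖ ≤ M}ᶜ = μ {ω | ¬ ‖Y ω‖ ≤ M} := h1
        _ ≤ μ {ω | M ^ 2 ≤ ‖Y ω‖ ^ 2} := measure_mono h2
        _ = ENNReal.ofReal (μ {ω | M ^ 2 ≤ ‖Y ω‖ ^ 2}).toReal := (ENNReal.ofReal_toReal hfin).symm
        _ ≤ ENNReal.ofReal (1 / M) := ENNReal.ofReal_le_ofReal h4
    have hc_ne : ν {y : EuclideanSpace ℝ (Fin d) | ‖y‖ ≤ M}ᶜ ≠ ∞ := measure_ne_top _ _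
    have htot : ν {y : EuclideanSpace ℝ (Fin d) | ‖y‖ ≤ M}
        + ν {y : EuclideanSpace ℝ (Fin d) | ‖y‖ ≤ M}ᶜ = 1 := by
      rw [measure_add_measure_compl hS2m]
      exact measure_univ
    have hinvnn : (0:ℝ) ≤ 1 / M := by positivity
    have h1nn : (0:ℝ) ≤ 1 - 1 / M := by
      rw [sub_nonneg, div_le_one hM0]; exact hM.le
    have hsum : ENNReal.ofReal (1 - 1 / M) + ENNReal.ofReal (1 / M) = 1 := by
      rw [← ENNReal.ofReal_add h1nn hinvnn]
      norm_num
    have key : ENNReal.ofReal (1 - 1 / M) + ν {y : EuclideanSpace ℝ (Fin d) | ‖y‖ ≤ M}ᶜ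
        ≤ ν {y : EuclideanSpace ℝ (Fin d) | ‖y‖ ≤ M}
          + ν {y : EuclideanSpace ℝ (Fin d) | ‖y‖ ≤ M}ᶜ := by
      rw [htot, ← hsum]
      exact add_le_add_right hcm _
    exact (ENNReal.add_le_add_iff_right hc_ne).mp key
  -- the bad set is a.e. not hit
  have hbadm : Measurable fun v : EuclideanSpace ℝ (Fin d) => ν {y | v - y ∈ N} := by
    have hA : MeasurableSet {p : EuclideanSpace ℝ (Fin d) × EuclideanSpace ℝ (Fin d) |
        p.1 - p.2 ∈ N} := (measurable_fst.sub measurable_snd) hNm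
    exact measurable_measure_prodMk_left hA
  have hbad0 : ∫⁻ v, ν {y | v - y ∈ N} ∂volume = 0 := by
    have h1 : ∀ v : EuclideanSpace ℝ (Fin d),
        ν {y | v - y ∈ N} = ∫⁻ y, N.indicator (fun _ => (1:ℝ≥0∞)) (v - y) ∂ν := by
      intro v
      have hpre : {y : EuclideanSpace ℝ (Fin d) | v - y ∈ N} = (fun y => v - y) ⁻¹' N := rfl
      rw [hpre, ← lintegral_indicator_one (by exact (measurable_id.const_sub v) hNm)]
      refine lintegral_congr fun y => ?_
      by_cases h : v - y ∈ N <;> simp [h]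
    calc ∫⁻ v, ν {y | v - y ∈ N} ∂volume
        = ∫⁻ v, ∫⁻ y, N.indicator (fun _ => (1:ℝ≥0∞)) (v - y) ∂ν ∂volume :=
          lintegral_congr fun v => h1 v
      _ = ∫⁻ y, ∫⁻ v, N.indicator (fun _ => (1:ℝ≥0∞)) (v - y) ∂volume ∂ν :=
          lintegral_lintegral_swap
            (by exact ((measurable_one.indicator hNm).comp
              (measurable_fst.sub measurable_snd)).aemeasurable)
      _ = ∫⁻ _, volume N ∂ν := by
          refine lintegral_congr fun y => ?_
          rw [← lintegral_add_right_eq_self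
            (fun v => N.indicator (fun _ => (1:ℝ≥0∞)) (v - y)) y]
          simp only [add_sub_cancel_right]
          exact lintegral_indicator_one hNm
      _ = 0 := by simp [hN0]
  have hbad : ∀ᵐ v ∂(volume : Measure (EuclideanSpace ℝ (Fin d))), ν {y | v - y ∈ N} = 0 :=
    (lintegral_eq_zero_iff hbadm).mp hbad0
  -- a.e. finiteness
  have hPV : IsProbabilityMeasure (μ.map (fun ω => X ω + Y ω)) :=
    Measure.isProbabilityMeasure_map ((hXm.add hYm).aemeasurable)
  have hone : ∫⁻ v, gV v ∂volume = 1 := by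
    have h := congrArg (fun m : Measure (EuclideanSpace ℝ (Fin d)) => m Set.univ) hmap
    simp only [measure_univ] at h
    rw [withDensity_apply _ MeasurableSet.univ, setLIntegral_univ] at h
    exact h.symm
  have hfin : ∀ᵐ v ∂(volume : Measure (EuclideanSpace ℝ (Fin d))), gV v < ∞ :=
    ae_lt_top hgVm (by rw [hone]; exact ENNReal.one_ne_top)
  -- the lower bound function
  have h1nn : (0:ℝ) ≤ 1 - 1 / M := by
    rw [sub_nonneg, div_le_one hM0]; exact hM.le
  set K₁ : ℝ := γ₁ * Real.exp (-2 * γ₂ * M ^ 2) * (1 - 1 / M) with hK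
  set B : EuclideanSpace ℝ (Fin d) → ℝ :=
    fun v => if 2 * M ≤ ‖v‖ then K₁ * Real.exp (-2 * γ₂ * ‖v‖ ^ 2) else 0 with hB
  have hlow : ∀ᵐ v ∂(volume : Measure (EuclideanSpace ℝ (Fin d))),
      ENNReal.ofReal (B v) ≤ gV v := by
    filter_upwards [hbad] with v hv
    by_cases h2M : 2 * M ≤ ‖v‖
    · have hvN : ∀ᵐ y ∂ν, v - y ∉ N := by
        rw [ae_iff]
        simpa using hv
      have hc : ∀ᵐ y ∂ν, y ∈ {y : EuclideanSpace ℝ (Fin d) | ‖y‖ ≤ M} →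
          ENNReal.ofReal (γ₁ * Real.exp (-2 * γ₂ * M ^ 2) * Real.exp (-2 * γ₂ * ‖v‖ ^ 2))
            ≤ g (v - y) := by
        filter_upwards [hvN] with y hyN hyS
        have hyS' : ‖y‖ ≤ M := hyS
        have hge : M ≤ ‖v - y‖ := by
          have h := norm_sub_norm_le v y
          linarith
        have hφle : φ (v - y) ≤ g (v - y) := by
          by_contra hcon
          exact hyN (hNsub hcon)
        refine le_trans ?_ hφle
        have hval : φ (v - y) = ENNReal.ofReal (γ₁ * Real.exp (-γ₂ * ‖v - y‖ ^ 2)) :=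
          Set.indicator_of_mem (show v - y ∈ {x : EuclideanSpace ℝ (Fin d) | M ≤ ‖x‖} from hge) _
        rw [hval]
        apply ENNReal.ofReal_le_ofReal
        have hsq : ‖v - y‖ ^ 2 ≤ 2 * ‖v‖ ^ 2 + 2 * M ^ 2 := by
          have h1 : ‖v - y‖ ≤ ‖v‖ + ‖y‖ := norm_sub_le v y
          nlinarith [norm_nonneg (v - y), norm_nonneg v, norm_nonneg y]
        calc γ₁ * Real.exp (-2 * γ₂ * M ^ 2) * Real.exp (-2 * γ₂ * ‖v‖ ^ 2)
            = γ₁ * Real.exp (-2 * γ₂ * M ^ 2 + -2 * γ₂ * ‖v‖ ^ 2) := by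
              rw [mul_assoc, ← Real.exp_add]
          _ ≤ γ₁ * Real.exp (-γ₂ * ‖v - y‖ ^ 2) := by
              refine mul_le_mul_of_nonneg_left ?_ hγ₁.le
              exact Real.exp_le_exp.mpr (by nlinarith)
      have h5 : ENNReal.ofReal (γ₁ * Real.exp (-2 * γ₂ * M ^ 2) * Real.exp (-2 * γ₂ * ‖v‖ ^ 2))
            * ν {y | ‖y‖ ≤ M}
          ≤ ∫⁻ y in {y | ‖y‖ ≤ M}, g (v - y) ∂ν := by
        rw [← setLIntegral_const]
        exact lintegral_mono_ae ((ae_restrict_iff' hS2m).mpr hc)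
      have h6 : ∫⁻ y in {y | ‖y‖ ≤ M}, g (v - y) ∂ν ≤ gV v := setLIntegral_le_lintegral _ _
      refine le_trans ?_ (le_trans h5 h6)
      rw [show B v = K₁ * Real.exp (-2 * γ₂ * ‖v‖ ^ 2) from if_pos h2M]
      calc ENNReal.ofReal (K₁ * Real.exp (-2 * γ₂ * ‖v‖ ^ 2))
          = ENNReal.ofReal (γ₁ * Real.exp (-2 * γ₂ * M ^ 2) * Real.exp (-2 * γ₂ * ‖v‖ ^ 2))
            * ENNReal.ofReal (1 - 1 / M) := by
            rw [← ENNReal.ofReal_mul (by positivity)]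
            congr 1
            rw [hK]; ring
        _ ≤ _ := mul_le_mul_right hmarkov _
    · rw [show B v = 0 from if_neg h2M]
      simp
  refine ⟨fun v => max ((gV v).toReal) (B v), ?_, ?_⟩
  · rw [hmap]
    refine (withDensity_congr_ae ?_).symm
    filter_upwards [hfin, hlow] with v hv1 hv2
    have hBle : B v ≤ (gV v).toReal := by
      exact (ENNReal.ofReal_le_iff_le_toReal hv1.ne).mp hv2
    rw [max_eq_left hBle, ENNReal.ofReal_toReal hv1.ne]
  · intro v hv
    have hBv : B v = K₁ * Real.exp (-2 * γ₂ * ‖v‖ ^ 2) := if_pos hv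
    calc γ₁ * Real.exp (-2 * γ₂ * M ^ 2) * (1 - 1 / M) * Real.exp (-2 * γ₂ * ‖v‖ ^ 2)
        = B v := by rw [hBv, hK]
      _ ≤ max ((gV v).toReal) (B v) := le_max_right _ _
end
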